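/- There exists a CMDRR(10,2) whose 49 games can be partitioned into 16 rounds of 3 games each and one round of 1 game, such that each player plays in at most one game per round. -/
import Mathlib


open scoped Classical

/-- A mixed doubles game: an unordered pair of teams, each team being a
(man, woman) pair, for `n` men and `n` women indexed by `Fin n`. -/
abbrev Game (n : ℕ) := Sym2 (Fin n × Fin n)

/-- A game is valid if its two teams have distinct men and distinct women. -/
def Game.valid {n : ℕ} (g : Game n) : Prop :=
  ∃ a b : Fin n × Fin n, g = s(a, b) ∧ a.1 ≠ b.1 ∧ a.2 ≠ b.2

/-- Man `m` plays in game `g`. -/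
def Game.manIn {n : ℕ} (m : Fin n) (g : Game n) : Prop :=
  ∃ a b : Fin n × Fin n, g = s(a, b) ∧ a.1 = m

/-- Woman `w` plays in game `g`. -/
def Game.womanIn {n : ℕ} (w : Fin n) (g : Game n) : Prop :=
  ∃ a b : Fin n × Fin n, g = s(a, b) ∧ a.2 = w

/-- Man `m` and woman `w` are partners (teammates) in game `g`. -/
def Game.partners {n : ℕ} (m w : Fin n) (g : Game n) : Prop :=
  (m, w) ∈ g

/-- Man `m` and woman `w` are opponents in game `g` (on different teams). -/
def Game.opposesMW {n : ℕ} (m w : Fin n) (g : Game n) : Prop :=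
  ∃ a b : Fin n × Fin n, g = s(a, b) ∧ a.1 = m ∧ b.2 = w

/-- Men `m` and `m'` are opponents in game `g`. -/
def Game.opposesMM {n : ℕ} (m m' : Fin n) (g : Game n) : Prop :=
  ∃ a b : Fin n × Fin n, g = s(a, b) ∧ a.1 = m ∧ b.1 = m'

/-- Women `w` and `w'` are opponents in game `g`. -/
def Game.opposesWW {n : ℕ} (w w' : Fin n) (g : Game n) : Prop :=
  ∃ a b : Fin n × Fin n, g = s(a, b) ∧ a.2 = w ∧ b.2 = w'

/-- A complete mixed doubles round robin tournament CMDRR(n,k). -/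
structure CMDRR (n k : ℕ) where
  /-- The spouse pairs (man, woman). -/
  spouses : Finset (Fin n × Fin n)
  spouses_card : spouses.card = k
  spouses_inj1 : ∀ p ∈ spouses, ∀ q ∈ spouses, p.1 = q.1 → p = q
  spouses_inj2 : ∀ p ∈ spouses, ∀ q ∈ spouses, p.2 = q.2 → p = q
  /-- The multiset of games. -/
  games : Multiset (Game n)
  valid : ∀ g ∈ games, g.valid
  /-- (i) no game contains both members of a spouse pair. -/
  no_spouse_game : ∀ g ∈ games, ∀ p ∈ spouses, ¬ (Game.manIn p.1 g ∧ Game.womanIn p.2 g)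
  /-- (ii) every non-spouse man-woman pair partners exactly once ... -/
  partners_once : ∀ m w : Fin n, (m, w) ∉ spouses →
    games.countP (Game.partners m w) = 1
  /-- ... and opposes exactly once. -/
  opposesMW_once : ∀ m w : Fin n, (m, w) ∉ spouses →
    games.countP (Game.opposesMW m w) = 1
  /-- (iii) a spoused man opposes every other man exactly once. -/
  spousedM_opposes : ∀ m ∈ spouses.image Prod.fst, ∀ m' : Fin n, m' ≠ m →
    games.countP (Game.opposesMM m m') = 1
  /-- (iii) a spoused woman opposes every other woman exactly once. -/
  spousedW_opposes : ∀ w ∈ spouses.image Prod.snd, ∀ w' : Fin n, w' ≠ w →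
    games.countP (Game.opposesWW w w') = 1
  /-- (iv) an unspoused man opposes exactly one other unspoused man exactly twice,
  and all other men exactly once. -/
  unspousedM_opposes : ∀ m : Fin n, m ∉ spouses.image Prod.fst →
    ∃ m' : Fin n, m' ≠ m ∧ m' ∉ spouses.image Prod.fst ∧
      games.countP (Game.opposesMM m m') = 2 ∧
      ∀ m'' : Fin n, m'' ≠ m → m'' ≠ m' → games.countP (Game.opposesMM m m'') = 1
  /-- (iv) likewise for unspoused women. -/
  unspousedW_opposes : ∀ w : Fin n, w ∉ spouses.image Prod.snd →
    ∃ w' : Fin n, w' ≠ w ∧ w' ∉ spouses.image Prod.snd ∧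
      games.countP (Game.opposesWW w w') = 2 ∧
      ∀ w'' : Fin n, w'' ≠ w → w'' ≠ w' → games.countP (Game.opposesWW w w'') = 1

/-- A round: a multiset of games in which each player appears at most once. -/
def IsRound {n : ℕ} (r : Multiset (Game n)) : Prop :=
  (∀ m : Fin n, r.countP (Game.manIn m) ≤ 1) ∧
  (∀ w : Fin n, r.countP (Game.womanIn w) ≤ 1)

/-- A full round: all players play if `n` is even; all but exactly one man and
one woman play if `n` is odd. -/
def FullRound {n : ℕ} (r : Multiset (Game n)) : Prop :=
  IsRound r ∧
  ((Even n ∧ (∀ m : Fin n, r.countP (Game.manIn m) = 1) ∧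
      (∀ w : Fin n, r.countP (Game.womanIn w) = 1)) ∨
   (¬ Even n ∧ (∃! m : Fin n, r.countP (Game.manIn m) = 0) ∧
      (∃! w : Fin n, r.countP (Game.womanIn w) = 0)))

namespace CM
def validB {n : ℕ} : Game n → Bool :=
  Sym2.lift ⟨fun a b => a.1 != b.1 && a.2 != b.2, by
    intro a b
    rw [Bool.eq_iff_iff]
    simp only [Bool.and_eq_true, bne_iff_ne]
    constructor <;> rintro ⟨h1, h2⟩ <;> exact ⟨h1.symm, h2.symm⟩⟩

def manInB {n : ℕ} (m : Fin n) : Game n → Bool :=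
  Sym2.lift ⟨fun a b => a.1 == m || b.1 == m, by intro a b; simp [Bool.or_comm]⟩

def womanInB {n : ℕ} (w : Fin n) : Game n → Bool :=
  Sym2.lift ⟨fun a b => a.2 == w || b.2 == w, by intro a b; simp [Bool.or_comm]⟩

def opposesMWB {n : ℕ} (m w : Fin n) : Game n → Bool :=
  Sym2.lift ⟨fun a b => (a.1 == m && b.2 == w) || (b.1 == m && a.2 == w), by
    intro a b; simp [Bool.or_comm]⟩

def opposesMMB {n : ℕ} (m m' : Fin n) : Game n → Bool :=
  Sym2.lift ⟨fun a b => (a.1 == m && b.1 == m') || (b.1 == m && a.1 == m'), by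
    intro a b; simp [Bool.or_comm]⟩

def opposesWWB {n : ℕ} (w w' : Fin n) : Game n → Bool :=
  Sym2.lift ⟨fun a b => (a.2 == w && b.2 == w') || (b.2 == w && a.2 == w'), by
    intro a b; simp [Bool.or_comm]⟩

def partnersB {n : ℕ} (m w : Fin n) : Game n → Bool :=
  Sym2.lift ⟨fun a b => a == (m, w) || b == (m, w), by intro a b; simp [Bool.or_comm]⟩

lemma valid_iff {n : ℕ} (g : Game n) : g.valid ↔ validB g = true := by
  induction g using Sym2.inductionOn with
  | hf a b =>
    simp only [validB, Sym2.lift_mk]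
    constructor
    · rintro ⟨c, d, h, h1, h2⟩
      rw [Sym2.eq_iff] at h
      rcases h with ⟨rfl, rfl⟩ | ⟨rfl, rfl⟩ <;> simp_all [bne_iff_ne] <;> tauto
    · intro h; simp [bne_iff_ne] at h; exact ⟨a, b, rfl, h.1, h.2⟩

lemma manIn_iff {n : ℕ} (m : Fin n) (g : Game n) : Game.manIn m g ↔ manInB m g = true := by
  induction g using Sym2.inductionOn with
  | hf a b =>
    simp only [manInB, Sym2.lift_mk]
    constructor
    · rintro ⟨c, d, h, h1⟩
      rw [Sym2.eq_iff] at h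
      rcases h with ⟨rfl, rfl⟩ | ⟨rfl, rfl⟩ <;> simp_all
    · intro h; simp at h
      rcases h with h | h
      · exact ⟨a, b, rfl, h⟩
      · exact ⟨b, a, Sym2.eq_swap, h⟩

lemma womanIn_iff {n : ℕ} (w : Fin n) (g : Game n) : Game.womanIn w g ↔ womanInB w g = true := by
  induction g using Sym2.inductionOn with
  | hf a b =>
    simp only [womanInB, Sym2.lift_mk]
    constructor
    · rintro ⟨c, d, h, h1⟩
      rw [Sym2.eq_iff] at h
      rcases h with ⟨rfl, rfl⟩ | ⟨rfl, rfl⟩ <;> simp_all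
    · intro h; simp at h
      rcases h with h | h
      · exact ⟨a, b, rfl, h⟩
      · exact ⟨b, a, Sym2.eq_swap, h⟩

lemma opposesMW_iff {n : ℕ} (m w : Fin n) (g : Game n) :
    Game.opposesMW m w g ↔ opposesMWB m w g = true := by
  induction g using Sym2.inductionOn with
  | hf a b =>
    simp only [opposesMWB, Sym2.lift_mk]
    constructor
    · rintro ⟨c, d, h, h1, h2⟩
      rw [Sym2.eq_iff] at h
      rcases h with ⟨rfl, rfl⟩ | ⟨rfl, rfl⟩ <;> simp_all
    · intro h; simp at h
      rcases h with ⟨h1, h2⟩ | ⟨h1, h2⟩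
      · exact ⟨a, b, rfl, h1, h2⟩
      · exact ⟨b, a, Sym2.eq_swap, h1, h2⟩

lemma opposesMM_iff {n : ℕ} (m m' : Fin n) (g : Game n) :
    Game.opposesMM m m' g ↔ opposesMMB m m' g = true := by
  induction g using Sym2.inductionOn with
  | hf a b =>
    simp only [opposesMMB, Sym2.lift_mk]
    constructor
    · rintro ⟨c, d, h, h1, h2⟩
      rw [Sym2.eq_iff] at h
      rcases h with ⟨rfl, rfl⟩ | ⟨rfl, rfl⟩ <;> simp_all
    · intro h; simp at h
      rcases h with ⟨h1, h2⟩ | ⟨h1, h2⟩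
      · exact ⟨a, b, rfl, h1, h2⟩
      · exact ⟨b, a, Sym2.eq_swap, h1, h2⟩

lemma opposesWW_iff {n : ℕ} (w w' : Fin n) (g : Game n) :
    Game.opposesWW w w' g ↔ opposesWWB w w' g = true := by
  induction g using Sym2.inductionOn with
  | hf a b =>
    simp only [opposesWWB, Sym2.lift_mk]
    constructor
    · rintro ⟨c, d, h, h1, h2⟩
      rw [Sym2.eq_iff] at h
      rcases h with ⟨rfl, rfl⟩ | ⟨rfl, rfl⟩ <;> simp_all
    · intro h; simp at h
      rcases h with ⟨h1, h2⟩ | ⟨h1, h2⟩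
      · exact ⟨a, b, rfl, h1, h2⟩
      · exact ⟨b, a, Sym2.eq_swap, h1, h2⟩

lemma partners_iff {n : ℕ} (m w : Fin n) (g : Game n) :
    Game.partners m w g ↔ partnersB m w g = true := by
  induction g using Sym2.inductionOn with
  | hf a b =>
    simp only [partnersB, Sym2.lift_mk, Game.partners, Sym2.mem_iff]
    constructor
    · rintro (h | h) <;> simp [h.symm]
    · intro h; simp at h; rcases h with h | h <;> simp [h]

lemma countP_to_bool {α : Type*} (s : Multiset α) (p : α → Prop) [DecidablePred p]
    (q : α → Bool) (h : ∀ x, p x ↔ q x = true) :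
    s.countP p = s.countP (fun x => q x = true) :=
  Multiset.countP_congr rfl (fun x _ => propext (h x))



set_option maxRecDepth 100000

lemma countP_coe_bool {α : Type} (l : List α) (p : α → Prop) [DecidablePred p]
    (q : α → Bool) (h : ∀ x, p x ↔ q x = true) :
    Multiset.countP p (↑l : Multiset α) = l.countP q := by
  rw [Multiset.coe_countP]
  congr 1
  funext x
  by_cases hp : p x
  · simp [hp, (h x).mp hp]
  · have : q x ≠ true := fun hq => hp ((h x).mpr hq)
    simp [hp, this]

def mk (a b c d : Fin 10) : Game 10 := s(((a : Fin 10), (b : Fin 10)), ((c : Fin 10), (d : Fin 10)))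
def R1 : List (Game 10) := [mk 0 5 3 2, mk 8 0 9 3, mk 4 4 5 6]
def R2 : List (Game 10) := [mk 2 7 8 4, mk 5 1 6 5, mk 1 2 9 8]
def R3 : List (Game 10) := [mk 2 1 3 9, mk 5 0 8 8, mk 6 7 9 2]
def R4 : List (Game 10) := [mk 4 7 5 5, mk 8 1 9 6, mk 3 4 7 3]
def R5 : List (Game 10) := [mk 2 2 7 1, mk 1 5 6 4, mk 0 3 5 9]
def R6 : List (Game 10) := [mk 1 8 8 6, mk 6 1 7 0, mk 2 9 9 7]
def R7 : List (Game 10) := [mk 1 3 2 5, mk 5 4 9 9, mk 0 1 8 7]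
def R8 : List (Game 10) := [mk 3 8 9 4, mk 1 9 4 0, mk 5 3 7 2]
def R9 : List (Game 10) := [mk 3 1 5 8, mk 0 2 1 4, mk 4 6 6 3]
def R10 : List (Game 10) := [mk 1 6 7 9, mk 2 8 4 5, mk 6 2 8 3]
def R11 : List (Game 10) := [mk 4 8 7 7, mk 2 6 5 2, mk 3 5 8 9]
def R12 : List (Game 10) := [mk 3 7 6 6, mk 4 9 8 2, mk 0 8 2 3]
def R13 : List (Game 10) := [mk 0 9 6 8, mk 2 0 3 6, mk 7 4 8 5]
def R14 : List (Game 10) := [mk 1 7 3 3, mk 0 4 4 1, mk 7 5 9 0]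
def R15 : List (Game 10) := [mk 4 3 9 1, mk 2 4 6 0, mk 0 7 7 6]
def R16 : List (Game 10) := [mk 6 9 7 8, mk 3 0 4 2, mk 0 6 9 5]
def R17 : List (Game 10) := [mk 1 0 5 7]
def gamesL : List (Game 10) := R1 ++ R2 ++ R3 ++ R4 ++ R5 ++ R6 ++ R7 ++ R8 ++ R9 ++ R10 ++ R11 ++ R12 ++ R13 ++ R14 ++ R15 ++ R16 ++ R17
def gamesM : Multiset (Game 10) := ↑gamesL
def roundsL : List (Multiset (Game 10)) :=
  [↑R1, ↑R2, ↑R3, ↑R4, ↑R5, ↑R6, ↑R7, ↑R8, ↑R9, ↑R10, ↑R11, ↑R12, ↑R13, ↑R14, ↑R15, ↑R16]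
def roundsM : Multiset (Multiset (Game 10)) := ↑roundsL
def shortM : Multiset (Game 10) := ↑R17
def spousesL : List (Fin 10 × Fin 10) := [((0 : Fin 10), (0 : Fin 10)), ((1 : Fin 10), (1 : Fin 10))]
def spousesF : Finset (Fin 10 × Fin 10) := {((0 : Fin 10), (0 : Fin 10)), ((1 : Fin 10), (1 : Fin 10))}

lemma isRound_coe (L : List (Game 10))
    (h : ∀ m : Fin 10, L.countP (manInB m) ≤ 1 ∧ L.countP (womanInB m) ≤ 1) :
    IsRound (↑L : Multiset (Game 10)) := by
  refine ⟨fun m => ?_, fun w => ?_⟩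
  · rw [countP_coe_bool L _ (manInB m) (manIn_iff m)]; exact (h m).1
  · rw [countP_coe_bool L _ (womanInB w) (womanIn_iff w)]; exact (h w).2

def T : CMDRR 10 2 where
  spouses := spousesF
  spouses_card := by decide
  spouses_inj1 := by decide
  spouses_inj2 := by decide
  games := gamesM
  valid := by
    have HB : gamesL.all validB = true := by decide
    have H : ∀ g ∈ gamesL, validB g = true := List.all_eq_true.mp HB
    exact fun g hg => (valid_iff g).mpr (H g (Multiset.mem_coe.mp hg))
  no_spouse_game := by
    have HB : gamesL.all (fun g => spousesL.all
        (fun p => !(manInB p.1 g && womanInB p.2 g))) = true := by decide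
    have H : ∀ g ∈ gamesL, ∀ p ∈ spousesL,
        ¬ (manInB p.1 g = true ∧ womanInB p.2 g = true) := by
      intro g hg p hp hcon
      have := List.all_eq_true.mp (List.all_eq_true.mp HB g hg) p hp
      simp only [Bool.not_eq_true', Bool.and_eq_false_iff] at this
      rcases this with h | h
      · rw [hcon.1] at h; simp at h
      · rw [hcon.2] at h; simp at h
    have hsp : ∀ p : Fin 10 × Fin 10, p ∈ spousesF → p ∈ spousesL := by decide
    intro g hg p hp hcon
    exact H g (Multiset.mem_coe.mp hg) p (hsp p hp)
      ⟨(manIn_iff p.1 g).mp hcon.1, (womanIn_iff p.2 g).mp hcon.2⟩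
  partners_once := by
    have H : ∀ m w : Fin 10, (m, w) ∉ spousesF →
        gamesL.countP (partnersB m w) = 1 := by decide
    intro m w h
    exact (countP_coe_bool gamesL _ (partnersB m w) (partners_iff m w)).trans (H m w h)
  opposesMW_once := by
    have H : ∀ m w : Fin 10, (m, w) ∉ spousesF →
        gamesL.countP (opposesMWB m w) = 1 := by decide
    intro m w h
    exact (countP_coe_bool gamesL _ (opposesMWB m w) (opposesMW_iff m w)).trans (H m w h)
  spousedM_opposes := by
    have H : ∀ m ∈ spousesF.image Prod.fst, ∀ m' : Fin 10, m' ≠ m →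
        gamesL.countP (opposesMMB m m') = 1 := by decide
    intro m hm m' h
    exact (countP_coe_bool gamesL _ (opposesMMB m m') (opposesMM_iff m m')).trans (H m hm m' h)
  spousedW_opposes := by
    have H : ∀ w ∈ spousesF.image Prod.snd, ∀ w' : Fin 10, w' ≠ w →
        gamesL.countP (opposesWWB w w') = 1 := by decide
    intro w hw w' h
    exact (countP_coe_bool gamesL _ (opposesWWB w w') (opposesWW_iff w w')).trans (H w hw w' h)
  unspousedM_opposes := by
    have H : ∀ m : Fin 10, m ∉ spousesF.image Prod.fst →
        ∃ m' : Fin 10, m' ≠ m ∧ m' ∉ spousesF.image Prod.fst ∧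
          gamesL.countP (opposesMMB m m') = 2 ∧
          ∀ m'' : Fin 10, m'' ≠ m → m'' ≠ m' →
            gamesL.countP (opposesMMB m m'') = 1 := by decide
    intro m hm
    obtain ⟨m', h1, h2, h3, h4⟩ := H m hm
    refine ⟨m', h1, h2, ?_, ?_⟩
    · exact (countP_coe_bool gamesL _ (opposesMMB m m') (opposesMM_iff m m')).trans h3
    · intro m'' hne1 hne2
      exact (countP_coe_bool gamesL _ (opposesMMB m m'') (opposesMM_iff m m'')).trans
        (h4 m'' hne1 hne2)
  unspousedW_opposes := by
    have H : ∀ w : Fin 10, w ∉ spousesF.image Prod.snd →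
        ∃ w' : Fin 10, w' ≠ w ∧ w' ∉ spousesF.image Prod.snd ∧
          gamesL.countP (opposesWWB w w') = 2 ∧
          ∀ w'' : Fin 10, w'' ≠ w → w'' ≠ w' →
            gamesL.countP (opposesWWB w w'') = 1 := by decide
    intro w hw
    obtain ⟨w', h1, h2, h3, h4⟩ := H w hw
    refine ⟨w', h1, h2, ?_, ?_⟩
    · exact (countP_coe_bool gamesL _ (opposesWWB w w') (opposesWW_iff w w')).trans h3
    · intro w'' hne1 hne2
      exact (countP_coe_bool gamesL _ (opposesWWB w w'') (opposesWW_iff w w'')).trans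
        (h4 w'' hne1 hne2)

end CM
/-- There is a CMDRR(10,2) whose 49 games split into 16 rounds of 3 games each
and one round of 1 game. -/
theorem cmdrr_10_2_resolution :
    ∃ T : CMDRR 10 2, ∃ rounds : Multiset (Multiset (Game 10)),
      ∃ short : Multiset (Game 10),
      rounds.sum + short = T.games ∧ Multiset.card rounds = 16 ∧
      (∀ r ∈ rounds, IsRound r ∧ Multiset.card r = 3) ∧
      IsRound short ∧ Multiset.card short = 1 := by
  classical
  refine ⟨CM.T, CM.roundsM, CM.shortM, ?_, ?_, ?_, ?_, ?_⟩
  · rfl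
  · rfl
  · intro r hr
    have hr' : r ∈ CM.roundsL := Multiset.mem_coe.mp hr
    simp only [CM.roundsL, List.mem_cons, List.not_mem_nil, or_false] at hr'
    rcases hr' with rfl | rfl | rfl | rfl | rfl | rfl | rfl | rfl | rfl | rfl | rfl | rfl | rfl | rfl | rfl | rfl <;>
      exact ⟨CM.isRound_coe _ (by decide), rfl⟩
  · exact CM.isRound_coe CM.R17 (by decide)
  · rfl
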